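/- Let d ≥ 2, let σ(i) = d+1−i, and for s > 0 let β(s) = (s, s², …, s^d)/(s + s² + ⋯ + s^d) ∈ ℝ_+^d. Then for every s > 0 and every j ∈ {1,…,d−1} one has y_j(β'(s)) < 0 and y'_j(β'(s)) > 0, and consequently L_{a, β'(s)}(x) < 0 for every a ∈ ℝ_+^d and every x ∈ I_a. In particular, for every s > 0 such that T_σ(β(s)) has no connections, the pair (β(s), −β'(s)) is positive. -/

import Mathlib

open MeasureTheory Filter Set

/-- `partialSum d a i` is the point `x_i(a) = Σ_{j < i} a_j` (with `Fin d` zero-indexed, so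
`i : ℕ` ranges over `0, …, d`). -/
noncomputable def partialSum (d : ℕ) (a : Fin d → ℝ) (i : ℕ) : ℝ :=
  ∑ j ∈ Finset.univ.filter (fun j : Fin d => (j : ℕ) < i), a j

/-- `partialSumPerm d σ a i` is the point `x'_i(a) = Σ_{j=1}^i a_{σ⁻¹(j)} = Σ_{j : σ j < i} a_j`. -/
noncomputable def partialSumPerm (d : ℕ) (σ : Equiv.Perm (Fin d)) (a : Fin d → ℝ) (i : ℕ) : ℝ :=
  ∑ j ∈ Finset.univ.filter (fun j : Fin d => ((σ j : ℕ)) < i), a j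

/-- The interval `I_a = [0, Σ_i a_i)`. -/
noncomputable def ietInterval (d : ℕ) (a : Fin d → ℝ) : Set ℝ :=
  Set.Ico 0 (partialSum d a d)

/-- The interval exchange transformation `T_σ(a)`: on the interval
`I_i = [x_{i-1}(a), x_i(a))` (zero-indexed: `[x_i, x_{i+1})` for `i : Fin d`) it translates by
`x'_{σ(i)-1}(a) - x_{i-1}(a)`.  Outside `I_a` it is (arbitrarily) the identity. -/
noncomputable def iet (d : ℕ) (σ : Equiv.Perm (Fin d)) (a : Fin d → ℝ) (x : ℝ) : ℝ :=
  if h : ∃ i : Fin d, partialSum d a (i : ℕ) ≤ x ∧ x < partialSum d a ((i : ℕ) + 1) then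
    x - partialSum d a ((h.choose : Fin d) : ℕ) + partialSumPerm d σ a ((σ h.choose : Fin d) : ℕ)
  else x

/-- `σ` is irreducible: no `k` with `1 ≤ k < d` such that `σ({1,…,k}) = {1,…,k}`. -/
def IETIrreducible (d : ℕ) (σ : Equiv.Perm (Fin d)) : Prop :=
  ∀ k : ℕ, 0 < k → k < d → ¬ (∀ i : Fin d, (i : ℕ) < k → (σ i : ℕ) < k)

/-- The function `L_{a,b} : I_a → ℝ`, equal to `y_i(b) - y'_{σ(i)}(b)` on `I_i(a)`
(extended by `0` off `I_a`). -/
noncomputable def ietL (d : ℕ) (σ : Equiv.Perm (Fin d)) (a b : Fin d → ℝ) (x : ℝ) : ℝ :=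
  if h : ∃ i : Fin d, partialSum d a (i : ℕ) ≤ x ∧ x < partialSum d a ((i : ℕ) + 1) then
    partialSum d b ((h.choose : ℕ) + 1) - partialSumPerm d σ b ((σ h.choose : ℕ) + 1)
  else 0

/-- A connection `(i,j,m)` of `T = T_σ(a)`: `i, j ∈ {0,…,d-1}`, `m > 0`, `T^m(x_i) = x_j`. -/
def IsConnection (d : ℕ) (σ : Equiv.Perm (Fin d)) (a : Fin d → ℝ) (i j m : ℕ) : Prop :=
  i < d ∧ j < d ∧ 0 < m ∧ (iet d σ a)^[m] (partialSum d a i) = partialSum d a j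

/-- `μ ∈ ℳ_a`: a non-atomic `T_σ(a)`-invariant Borel probability measure on `I_a`. -/
def IsIETInvariantMeasure (d : ℕ) (σ : Equiv.Perm (Fin d)) (a : Fin d → ℝ)
    (μ : Measure ℝ) : Prop :=
  IsProbabilityMeasure μ ∧ NoAtoms μ ∧ μ (ietInterval d a)ᶜ = 0 ∧
    Measure.map (iet d σ a) μ = μ

/-- `(a,b)` is a positive pair. -/
def IsPositivePair (d : ℕ) (σ : Equiv.Perm (Fin d)) (a b : Fin d → ℝ) : Prop :=
  (∀ μ : Measure ℝ, IsIETInvariantMeasure d σ a μ → 0 < ∫ x, ietL d σ a b x ∂μ) ∧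
  (∀ i j m : ℕ, IsConnection d σ a i j m →
    partialSum d b i - partialSum d b j <
      ∑ n ∈ Finset.range m, ietL d σ a b ((iet d σ a)^[n] (partialSum d a i)))

/-- `ε_n(a)`. -/
noncomputable def ietEps (d : ℕ) (σ : Equiv.Perm (Fin d)) (a : Fin d → ℝ) (n : ℕ) : ℝ :=
  sInf { v : ℝ | ∃ i j k l : ℕ, 1 ≤ i ∧ i ≤ d - 1 ∧ 1 ≤ j ∧ j ≤ d - 1 ∧
    k ≤ n ∧ l ≤ n ∧ (i, k) ≠ (j, l) ∧
    v = |(iet d σ a)^[k] (partialSum d a i) - (iet d σ a)^[l] (partialSum d a j)| }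

/-- `a` is of recurrence type: `limsup n ε_n(a) > 0`. -/
def OfRecurrenceType (d : ℕ) (σ : Equiv.Perm (Fin d)) (a : Fin d → ℝ) : Prop :=
  0 < Filter.limsup (fun n : ℕ => (n : ℝ) * ietEps d σ a n) Filter.atTop

/-- `a` is of bounded type: `liminf n ε_n(a) > 0`. -/
def OfBoundedType (d : ℕ) (σ : Equiv.Perm (Fin d)) (a : Fin d → ℝ) : Prop :=
  0 < Filter.liminf (fun n : ℕ => (n : ℝ) * ietEps d σ a n) Filter.atTop

/-- The (topological) support of a measure on `ℝ`. -/
def measSupport (μ : Measure ℝ) : Set ℝ :=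
  {x : ℝ | ∀ r : ℝ, 0 < r → 0 < μ (Set.Ioo (x - r) (x + r))}

/-- `μ` is a finite regular Borel measure on `ℝ` which is `(C,α)`-decaying and `D`-Federer. -/
def IsDecayingFederer (μ : Measure ℝ) (C α D : ℝ) : Prop :=
  IsFiniteMeasure μ ∧ μ.Regular ∧
  ∀ x ∈ measSupport μ, ∀ ε r : ℝ, 0 < ε → ε < 1 → 0 < r → r < 1 →
    μ (Set.Ioo (x - ε * r) (x + ε * r)) ≤
      ENNReal.ofReal (C * ε ^ α) * μ (Set.Ioo (x - r) (x + r)) ∧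
    μ (Set.Ioo (x - 3 * r) (x + 3 * r)) ≤
      ENNReal.ofReal D * μ (Set.Ioo (x - r) (x + r))

/-- `μ` is decaying and Federer: `(C,α)`-decaying and `D`-Federer for some `C, α, D > 0`. -/
def DecayingFederer (μ : Measure ℝ) : Prop :=
  ∃ C α D : ℝ, 0 < C ∧ 0 < α ∧ 0 < D ∧ IsDecayingFederer μ C α D

/-- The normalized Mahler curve `β(s) = (s, s², …, s^d) / (s + s² + ⋯ + s^d)`. -/
noncomputable def mahlerCurve (d : ℕ) (s : ℝ) : Fin d → ℝ :=
  fun i => s ^ ((i : ℕ) + 1) / ∑ j : Fin d, s ^ ((j : ℕ) + 1)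


/-! ### Auxiliary definitions and lemmas for `mahler_curve_positive` -/

noncomputable def mgP (d : ℕ) (s : ℝ) : ℝ := ∑ k : Fin d, s ^ ((k : ℕ) + 1)

noncomputable def mgQ (d : ℕ) (s : ℝ) : ℝ := ∑ k : Fin d, (((k : ℕ) : ℝ) + 1) * s ^ (k : ℕ)

noncomputable def mg (d : ℕ) (s : ℝ) : Fin d → ℝ := fun i =>
  ((((i : ℕ) : ℝ) + 1) * s ^ (i : ℕ) * mgP d s - s ^ ((i : ℕ) + 1) * mgQ d s) / (mgP d s) ^ 2

lemma partialSum_zero' (d : ℕ) (f : Fin d → ℝ) : partialSum d f 0 = 0 := by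
  simp [partialSum]

lemma filter_univ_lt (d : ℕ) :
    Finset.univ.filter (fun i : Fin d => (i : ℕ) < d) = Finset.univ :=
  Finset.filter_true_of_mem (fun i _ => i.isLt)

lemma partialSum_neg' (d : ℕ) (f : Fin d → ℝ) (j : ℕ) :
    partialSum d (fun i => -f i) j = -partialSum d f j := by
  simp [partialSum]

lemma partialSumPerm_neg' (d : ℕ) (σ : Equiv.Perm (Fin d)) (f : Fin d → ℝ) (j : ℕ) :
    partialSumPerm d σ (fun i => -f i) j = -partialSumPerm d σ f j := by
  simp [partialSumPerm]

lemma partialSum_mono' (d : ℕ) (a : Fin d → ℝ) (ha : ∀ i, 0 ≤ a i) {j k : ℕ} (h : j ≤ k) :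
    partialSum d a j ≤ partialSum d a k := by
  apply Finset.sum_le_sum_of_subset_of_nonneg
  · intro i hi
    simp only [Finset.mem_filter, Finset.mem_univ, true_and] at hi ⊢
    omega
  · intro i _ _; exact ha i

lemma mgP_pos (d : ℕ) (hd : 0 < d) (s : ℝ) (hs : 0 < s) : 0 < mgP d s := by
  haveI : NeZero d := ⟨by omega⟩
  exact Finset.sum_pos (fun k _ => pow_pos hs _) Finset.univ_nonempty

lemma mahler_hasDerivAt (d : ℕ) (hd : 0 < d) (s : ℝ) (hs : 0 < s) :
    HasDerivAt (mahlerCurve d) (mg d s) s := by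
  have hP := mgP_pos d hd s hs
  rw [hasDerivAt_pi]
  intro i
  simp only [mahlerCurve, mg, mgP, mgQ] at *
  have h1 : HasDerivAt (fun t : ℝ => t ^ ((i : ℕ) + 1))
      ((((i : ℕ) : ℝ) + 1) * s ^ (i : ℕ)) s := by
    simpa using hasDerivAt_pow ((i : ℕ) + 1) s
  have h2 : HasDerivAt (fun t : ℝ => ∑ k : Fin d, t ^ ((k : ℕ) + 1))
      (∑ k : Fin d, (((k : ℕ) : ℝ) + 1) * s ^ (k : ℕ)) s := by
    apply HasDerivAt.fun_sum
    intro k _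
    simpa using hasDerivAt_pow ((k : ℕ) + 1) s
  exact h1.div h2 (ne_of_gt hP)

lemma key_neg (d : ℕ) (hd : 2 ≤ d) (s : ℝ) (hs : 0 < s) (j : ℕ) (hj1 : 1 ≤ j) (hj2 : j ≤ d - 1) :
    (∑ i ∈ Finset.univ.filter (fun i : Fin d => (i : ℕ) < j),
        (((i : ℕ) : ℝ) + 1) * s ^ (i : ℕ)) * mgP d s -
      (∑ i ∈ Finset.univ.filter (fun i : Fin d => (i : ℕ) < j), s ^ ((i : ℕ) + 1)) * mgQ d s
      < 0 := by
  classical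
  set A := Finset.univ.filter (fun i : Fin d => (i : ℕ) < j) with hA
  set B := Finset.univ.filter (fun i : Fin d => ¬ (i : ℕ) < j) with hB
  have hterm : ∀ i k : Fin d,
      (((i : ℕ) : ℝ) + 1) * s ^ (i : ℕ) * s ^ ((k : ℕ) + 1)
          - s ^ ((i : ℕ) + 1) * ((((k : ℕ) : ℝ) + 1) * s ^ (k : ℕ))
        = (((i : ℕ) : ℝ) - ((k : ℕ) : ℝ)) * s ^ ((i : ℕ) + (k : ℕ) + 1) := by
    intro i k
    ring
  have expand :
      (∑ i ∈ A, (((i : ℕ) : ℝ) + 1) * s ^ (i : ℕ)) * mgP d s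
          - (∑ i ∈ A, s ^ ((i : ℕ) + 1)) * mgQ d s
        = ∑ i ∈ A, ∑ k : Fin d,
            (((i : ℕ) : ℝ) - ((k : ℕ) : ℝ)) * s ^ ((i : ℕ) + (k : ℕ) + 1) := by
    rw [mgP, mgQ, Finset.sum_mul_sum, Finset.sum_mul_sum, ← Finset.sum_sub_distrib]
    refine Finset.sum_congr rfl fun i _ => ?_
    rw [← Finset.sum_sub_distrib]
    exact Finset.sum_congr rfl fun k _ => hterm i k
  rw [expand]
  have hsplit : ∀ i : Fin d,
      (∑ k : Fin d, (((i : ℕ) : ℝ) - ((k : ℕ) : ℝ)) * s ^ ((i : ℕ) + (k : ℕ) + 1))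
        = (∑ k ∈ A, (((i : ℕ) : ℝ) - ((k : ℕ) : ℝ)) * s ^ ((i : ℕ) + (k : ℕ) + 1))
          + ∑ k ∈ B, (((i : ℕ) : ℝ) - ((k : ℕ) : ℝ)) * s ^ ((i : ℕ) + (k : ℕ) + 1) :=
    fun i => (Finset.sum_filter_add_sum_filter_not Finset.univ _ _).symm
  have hAne : A.Nonempty := by
    refine ⟨⟨0, by omega⟩, ?_⟩
    simp only [hA, Finset.mem_filter, Finset.mem_univ, true_and]
    omega
  have hBne : B.Nonempty := by
    refine ⟨⟨j, by omega⟩, ?_⟩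
    simp only [hB, Finset.mem_filter, Finset.mem_univ, true_and]
    omega
  have hS1 : (∑ i ∈ A, ∑ k ∈ A,
      (((i : ℕ) : ℝ) - ((k : ℕ) : ℝ)) * s ^ ((i : ℕ) + (k : ℕ) + 1)) = 0 := by
    have hdouble : (∑ i ∈ A, ∑ k ∈ A,
        (((i : ℕ) : ℝ) - ((k : ℕ) : ℝ)) * s ^ ((i : ℕ) + (k : ℕ) + 1))
        + (∑ i ∈ A, ∑ k ∈ A,
        (((i : ℕ) : ℝ) - ((k : ℕ) : ℝ)) * s ^ ((i : ℕ) + (k : ℕ) + 1)) = 0 := by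
      nth_rewrite 2 [Finset.sum_comm]
      rw [← Finset.sum_add_distrib]
      refine Finset.sum_eq_zero fun i _ => ?_
      rw [← Finset.sum_add_distrib]
      refine Finset.sum_eq_zero fun k _ => ?_
      ring
    linarith
  have hS2 : (∑ i ∈ A, ∑ k ∈ B,
      (((i : ℕ) : ℝ) - ((k : ℕ) : ℝ)) * s ^ ((i : ℕ) + (k : ℕ) + 1)) < 0 := by
    refine Finset.sum_neg (fun i hi => ?_) hAne
    refine Finset.sum_neg (fun k hk => ?_) hBne
    simp only [hA, Finset.mem_filter, Finset.mem_univ, true_and] at hi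
    simp only [hB, Finset.mem_filter, Finset.mem_univ, true_and] at hk
    apply mul_neg_of_neg_of_pos _ (pow_pos hs _)
    have h : (i : ℕ) < (k : ℕ) := by omega
    have h' : ((i : ℕ) : ℝ) < ((k : ℕ) : ℝ) := by exact_mod_cast h
    linarith
  calc (∑ i ∈ A, ∑ k : Fin d,
          (((i : ℕ) : ℝ) - ((k : ℕ) : ℝ)) * s ^ ((i : ℕ) + (k : ℕ) + 1))
      = (∑ i ∈ A, ∑ k ∈ A,
          (((i : ℕ) : ℝ) - ((k : ℕ) : ℝ)) * s ^ ((i : ℕ) + (k : ℕ) + 1))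
        + ∑ i ∈ A, ∑ k ∈ B,
          (((i : ℕ) : ℝ) - ((k : ℕ) : ℝ)) * s ^ ((i : ℕ) + (k : ℕ) + 1) := by
        rw [← Finset.sum_add_distrib]
        exact Finset.sum_congr rfl fun i _ => hsplit i
    _ < 0 := by linarith

lemma partialSum_mg (d : ℕ) (s : ℝ) (j : ℕ) :
    partialSum d (mg d s) j =
      ((∑ i ∈ Finset.univ.filter (fun i : Fin d => (i : ℕ) < j),
          (((i : ℕ) : ℝ) + 1) * s ^ (i : ℕ)) * mgP d s -
        (∑ i ∈ Finset.univ.filter (fun i : Fin d => (i : ℕ) < j), s ^ ((i : ℕ) + 1)) * mgQ d s)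
        / (mgP d s) ^ 2 := by
  rw [partialSum]
  simp only [mg]
  rw [← Finset.sum_div, Finset.sum_sub_distrib, ← Finset.sum_mul, ← Finset.sum_mul]

lemma partialSum_mg_neg (d : ℕ) (hd : 2 ≤ d) (s : ℝ) (hs : 0 < s) (j : ℕ)
    (hj1 : 1 ≤ j) (hj2 : j ≤ d - 1) : partialSum d (mg d s) j < 0 := by
  rw [partialSum_mg]
  exact div_neg_of_neg_of_pos (key_neg d hd s hs j hj1 hj2)
    (pow_pos (mgP_pos d (by omega) s hs) 2)

lemma partialSum_mg_total (d : ℕ) (hd : 0 < d) (s : ℝ) : partialSum d (mg d s) d = 0 := by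
  rw [partialSum_mg, filter_univ_lt]
  have h : (∑ i : Fin d, (((i : ℕ) : ℝ) + 1) * s ^ (i : ℕ)) * mgP d s
      - (∑ i : Fin d, s ^ ((i : ℕ) + 1)) * mgQ d s = 0 := by
    simp only [mgP, mgQ]; ring
  rw [h, zero_div]

lemma partialSum_mg_nonpos (d : ℕ) (hd : 2 ≤ d) (s : ℝ) (hs : 0 < s) (j : ℕ) (hj : j ≤ d) :
    partialSum d (mg d s) j ≤ 0 := by
  rcases Nat.eq_zero_or_pos j with h0 | h0
  · rw [h0, partialSum_zero']
  · rcases eq_or_lt_of_le hj with hD | hD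
    · rw [hD, partialSum_mg_total d (by omega) s]
    · exact (partialSum_mg_neg d hd s hs j h0 (by omega)).le

lemma partialSumPerm_eq (d : ℕ) (σ : Equiv.Perm (Fin d))
    (hσ : ∀ i : Fin d, (σ i : ℕ) = d - 1 - (i : ℕ)) (f : Fin d → ℝ) (j : ℕ) (hj : j ≤ d) :
    partialSumPerm d σ f j = partialSum d f d - partialSum d f (d - j) := by
  simp only [partialSumPerm, partialSum]
  have hfilter : Finset.univ.filter (fun i : Fin d => ((σ i : ℕ)) < j)
      = Finset.univ.filter (fun i : Fin d => ¬ ((i : ℕ) < d - j)) := by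
    refine Finset.filter_congr fun i _ => ?_
    rw [hσ i]
    have := i.isLt
    omega
  rw [hfilter, filter_univ_lt, eq_sub_iff_add_eq, add_comm]
  exact Finset.sum_filter_add_sum_filter_not _ _ _

lemma Lval_neg (d : ℕ) (hd : 2 ≤ d) (σ : Equiv.Perm (Fin d))
    (hσ : ∀ i : Fin d, (σ i : ℕ) = d - 1 - (i : ℕ)) (s : ℝ) (hs : 0 < s) (c : Fin d) :
    partialSum d (mg d s) ((c : ℕ) + 1)
      - partialSumPerm d σ (mg d s) ((σ c : ℕ) + 1) < 0 := by
  have hc := c.isLt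
  rw [hσ c, show d - 1 - (c : ℕ) + 1 = d - (c : ℕ) by omega,
      partialSumPerm_eq d σ hσ _ _ (by omega),
      partialSum_mg_total d (by omega) s,
      show d - (d - (c : ℕ)) = (c : ℕ) by omega]
  rcases (by omega : (c : ℕ) + 1 ≤ d - 1 ∨ (c : ℕ) + 1 = d) with h | h
  · have h1 := partialSum_mg_neg d hd s hs ((c : ℕ) + 1) (by omega) h
    have h2 := partialSum_mg_nonpos d hd s hs (c : ℕ) (by omega)
    linarith
  · rw [h, partialSum_mg_total d (by omega) s]
    have h2 := partialSum_mg_neg d hd s hs (c : ℕ) (by omega) (by omega)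
    linarith

lemma exists_idx (d : ℕ) (hd : 0 < d) (a : Fin d → ℝ) (x : ℝ) (hx0 : 0 ≤ x)
    (hxd : x < partialSum d a d) :
    ∃ i : Fin d, partialSum d a (i : ℕ) ≤ x ∧ x < partialSum d a ((i : ℕ) + 1) := by
  by_contra hcon
  push_neg at hcon
  have key : ∀ n, n ≤ d → partialSum d a n ≤ x := by
    intro n
    induction n with
    | zero => intro _; rw [partialSum_zero']; exact hx0
    | succ m ih =>
      intro hm
      have h1 : partialSum d a m ≤ x := ih (by omega)
      exact hcon ⟨m, by omega⟩ h1
  exact absurd hxd (not_lt.mpr (key d le_rfl))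

lemma idx_unique (d : ℕ) (a : Fin d → ℝ) (ha : ∀ i, 0 ≤ a i) (x : ℝ) (c i : Fin d)
    (hc1 : partialSum d a (c : ℕ) ≤ x) (hc2 : x < partialSum d a ((c : ℕ) + 1))
    (hi1 : partialSum d a (i : ℕ) ≤ x) (hi2 : x < partialSum d a ((i : ℕ) + 1)) : c = i := by
  rcases lt_trichotomy (c : ℕ) (i : ℕ) with h | h | h
  · have := partialSum_mono' d a ha (show (c : ℕ) + 1 ≤ (i : ℕ) by omega)
    linarith
  · exact Fin.ext h
  · have := partialSum_mono' d a ha (show (i : ℕ) + 1 ≤ (c : ℕ) by omega)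
    linarith

/-- For `d ≥ 2`, `σ(i) = d + 1 - i` (zero-indexed: `σ(i) = d - 1 - i`) and
`β` the normalized Mahler curve: for every `s > 0` and `1 ≤ j ≤ d - 1` one has
`y_j(β'(s)) < 0` and `y'_j(β'(s)) > 0`; consequently `L_{a, β'(s)} < 0` on `I_a` for every
`a ∈ ℝ₊^d`; and for every `s > 0` such that `T_σ(β(s))` has no connections, the pair
`(β(s), -β'(s))` is positive. -/
theorem mahler_curve_positive (d : ℕ) (hd : 2 ≤ d) (σ : Equiv.Perm (Fin d))
    (hσ : ∀ i : Fin d, (σ i : ℕ) = d - 1 - (i : ℕ)) :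
    (∀ s : ℝ, 0 < s → ∀ j : ℕ, 1 ≤ j → j ≤ d - 1 →
      partialSum d (deriv (mahlerCurve d) s) j < 0 ∧
      0 < partialSumPerm d σ (deriv (mahlerCurve d) s) j) ∧
    (∀ s : ℝ, 0 < s → ∀ a : Fin d → ℝ, (∀ i, 0 < a i) →
      ∀ x ∈ ietInterval d a, ietL d σ a (deriv (mahlerCurve d) s) x < 0) ∧
    (∀ s : ℝ, 0 < s → (¬ ∃ i j m : ℕ, IsConnection d σ (mahlerCurve d s) i j m) →
      IsPositivePair d σ (mahlerCurve d s) (fun i => -(deriv (mahlerCurve d) s i))) := by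
  have hd0 : 0 < d := by omega
  refine ⟨?_, ?_, ?_⟩
  · intro s hs j hj1 hj2
    have hderiv : deriv (mahlerCurve d) s = mg d s := (mahler_hasDerivAt d hd0 s hs).deriv
    rw [hderiv]
    refine ⟨partialSum_mg_neg d hd s hs j hj1 hj2, ?_⟩
    rw [partialSumPerm_eq d σ hσ _ j (by omega), partialSum_mg_total d hd0 s]
    have := partialSum_mg_neg d hd s hs (d - j) (by omega) (by omega)
    linarith
  · intro s hs a ha x hx
    have hderiv : deriv (mahlerCurve d) s = mg d s := (mahler_hasDerivAt d hd0 s hs).deriv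
    rw [hderiv]
    simp only [ietInterval, Set.mem_Ico] at hx
    have hex : ∃ i : Fin d, partialSum d a (i : ℕ) ≤ x ∧ x < partialSum d a ((i : ℕ) + 1) :=
      exists_idx d hd0 a x hx.1 hx.2
    simp only [ietL]
    rw [dif_pos hex]
    exact Lval_neg d hd σ hσ s hs hex.choose
  · intro s hs hnc
    have hderiv : deriv (mahlerCurve d) s = mg d s := (mahler_hasDerivAt d hd0 s hs).deriv
    set a : Fin d → ℝ := mahlerCurve d s with hadef
    set b' : Fin d → ℝ := fun i => -(deriv (mahlerCurve d) s i) with hb'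
    have hP := mgP_pos d hd0 s hs
    have ha : ∀ i, 0 < a i := fun i => div_pos (pow_pos hs _) hP
    constructor
    · intro μ hμ
      obtain ⟨hprob, hna, hnull, hinv⟩ := hμ
      haveI := hprob
      set w : Fin d → ℝ := fun c =>
        partialSum d b' ((c : ℕ) + 1) - partialSumPerm d σ b' ((σ c : ℕ) + 1) with hw
      have hwpos : ∀ c, 0 < w c := by
        intro c
        simp only [hw, hb', hderiv, partialSum_neg', partialSumPerm_neg']
        have := Lval_neg d hd σ hσ s hs c
        linarith
      set xs : ℕ → ℝ := partialSum d a with hxs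
      set F : ℝ → ℝ := fun x =>
        ∑ i : Fin d, (Set.Ico (xs (i : ℕ)) (xs ((i : ℕ) + 1))).indicator (fun _ => w i) x
        with hF
      have hLF : (fun x => ietL d σ a b' x) = F := by
        funext x
        by_cases hex : ∃ i : Fin d,
            partialSum d a (i : ℕ) ≤ x ∧ x < partialSum d a ((i : ℕ) + 1)
        · have hspec := hex.choose_spec
          simp only [ietL]
          rw [dif_pos hex]; simp only [hF]
          rw [Finset.sum_eq_single_of_mem hex.choose (Finset.mem_univ _) ?_]
          · rw [Set.indicator_of_mem (Set.mem_Ico.mpr hspec)]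
          · intro b _ hb
            refine Set.indicator_of_notMem (fun hmemb => ?_) _
            exact hb (idx_unique d a (fun k => (ha k).le) x b hex.choose
              (Set.mem_Ico.mp hmemb).1 (Set.mem_Ico.mp hmemb).2 hspec.1 hspec.2)
        · simp only [ietL]
          rw [dif_neg hex]; simp only [hF]
          symm
          exact Finset.sum_eq_zero fun i _ => Set.indicator_of_notMem
            (fun hmem => hex ⟨i, (Set.mem_Ico.mp hmem).1, (Set.mem_Ico.mp hmem).2⟩) _
      have hmeasIa : MeasurableSet (ietInterval d a) := measurableSet_Ico
      have h1 : μ (ietInterval d a) = 1 := by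
        have h := measure_add_measure_compl (μ := μ) hmeasIa
        rw [hnull, add_zero, measure_univ] at h
        exact h
      have hcover : ietInterval d a ⊆
          ⋃ i : Fin d, Set.Ico (xs (i : ℕ)) (xs ((i : ℕ) + 1)) := by
        intro y hy
        simp only [ietInterval, Set.mem_Ico] at hy
        obtain ⟨i, hy1, hy2⟩ := exists_idx d hd0 a y hy.1 hy.2
        exact Set.mem_iUnion.mpr ⟨i, Set.mem_Ico.mpr ⟨hy1, hy2⟩⟩
      have hexi : ∃ i : Fin d, μ (Set.Ico (xs (i : ℕ)) (xs ((i : ℕ) + 1))) ≠ 0 := by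
        by_contra hcon
        push_neg at hcon
        have h0 : μ (⋃ i : Fin d, Set.Ico (xs (i : ℕ)) (xs ((i : ℕ) + 1))) = 0 :=
          measure_iUnion_null hcon
        have hIa0 := measure_mono_null hcover h0
        rw [hIa0] at h1
        exact zero_ne_one h1
      obtain ⟨i0, hi0⟩ := hexi
      have hint : ∀ i : Fin d, i ∈ Finset.univ → Integrable
          (fun x => (Set.Ico (xs (i : ℕ)) (xs ((i : ℕ) + 1))).indicator (fun _ => w i) x) μ :=
        fun i _ => (integrable_const (w i)).indicator measurableSet_Ico
      rw [hLF]; simp only [hF]; rw [integral_finset_sum Finset.univ hint]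
      have hval : ∀ i : Fin d,
          ∫ x, (Set.Ico (xs (i : ℕ)) (xs ((i : ℕ) + 1))).indicator (fun _ => w i) x ∂μ
            = (μ (Set.Ico (xs (i : ℕ)) (xs ((i : ℕ) + 1)))).toReal • w i :=
        fun i => integral_indicator_const (w i) measurableSet_Ico
      rw [Finset.sum_congr rfl fun i _ => hval i]
      apply Finset.sum_pos'
      · intro i _; exact smul_nonneg ENNReal.toReal_nonneg (hwpos i).le
      · refine ⟨i0, Finset.mem_univ _, ?_⟩
        rw [smul_eq_mul]
        exact mul_pos (ENNReal.toReal_pos hi0 (measure_ne_top μ _)) (hwpos i0)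
    · intro i j m hconn
      exact absurd ⟨i, j, m, hconn⟩ hnc
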